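/- For the 2^n points [1:±1:…:±1] of ℙ^n, the d-th symbolic power of their ideal equals the d-th ordinary power: ⋂_{ε ∈ {±1}^n} ℘_ε^d = ( ⋂_{ε ∈ {±1}^n} ℘_ε )^d for every d ≥ 1. -/

import Mathlib

open MvPolynomial

/-- The vanishing ideal `℘_ε` of the point `[1:ε₁:…:εₙ] ∈ ℙⁿ`, generated by
the linear forms `x_i − ε_i·x₀`, `i = 1,…,n`. -/
noncomputable def pIdeal (n : ℕ) (ε : Fin n → ℂ) :
    Ideal (MvPolynomial (Fin (n+1)) ℂ) :=
  Ideal.span { p | ∃ i : Fin n, p = X i.succ - C (ε i) * X (0 : Fin (n+1)) }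

lemma pIdeal_eq (n : ℕ) (ε : Fin n → ℂ) :
    pIdeal n ε = Ideal.span (Set.range fun i : Fin n =>
      (X i.succ - C (ε i) * X (0 : Fin (n+1)) : MvPolynomial (Fin (n+1)) ℂ)) := by
  unfold pIdeal
  congr 1
  ext p
  simp [eq_comm]

/-- products of powers of elements of an ideal -/
lemma prod_pow_mem {R : Type*} [CommRing R] (I : Ideal R) {ι : Type*} (s : Finset ι)
    (g : ι → R) (hg : ∀ i ∈ s, g i ∈ I) (β : ι → ℕ) :
    (∏ i ∈ s, g i ^ β i) ∈ I ^ (∑ i ∈ s, β i) := by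
  classical
  induction s using Finset.induction with
  | empty => simpa using Ideal.one_mem _
  | insert a s hx ih =>
    rw [Finset.prod_insert hx, Finset.sum_insert hx, pow_add]
    exact Ideal.mul_mem_mul (Ideal.pow_mem_pow (hg a (Finset.mem_insert_self a s)) _)
      (ih (fun i hi => hg i (Finset.mem_insert_of_mem hi)))

noncomputable def qq (n : ℕ) (i : Fin n) : MvPolynomial (Fin (n+1)) ℂ :=
  X i.succ ^ 2 - X 0 ^ 2

noncomputable def Wgen (n : ℕ) (a : ℕ) (β δ : Fin n → ℕ) : MvPolynomial (Fin (n+1)) ℂ :=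
  X 0 ^ a * ∏ i, (qq n i ^ β i * X i.succ ^ δ i)

def WgenSet (n e : ℕ) : Set (MvPolynomial (Fin (n+1)) ℂ) :=
  {f | ∃ a β δ, (∀ i, δ i ≤ 1) ∧ e ≤ ∑ i, β i ∧ f = Wgen n a β δ}

noncomputable def Wspan (n e : ℕ) : Submodule ℂ (MvPolynomial (Fin (n+1)) ℂ) :=
  Submodule.span ℂ (WgenSet n e)

lemma Wspan_anti {n e e' : ℕ} (h : e ≤ e') : Wspan n e' ≤ Wspan n e := by
  apply Submodule.span_mono
  rintro f ⟨a, β, δ, hδ, hβ, rfl⟩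
  exact ⟨a, β, δ, hδ, le_trans h hβ, rfl⟩

lemma qq_mem (n : ℕ) (ε : Fin n → ℂ) (hε : ∀ i, ε i = 1 ∨ ε i = -1) (i : Fin n) :
    qq n i ∈ pIdeal n ε := by
  have h2 : ε i ^ 2 = 1 := by rcases hε i with h | h <;> rw [h] <;> ring
  have : qq n i = (X i.succ - C (ε i) * X (0 : Fin (n+1))) *
      (X i.succ + C (ε i) * X (0 : Fin (n+1))) := by
    unfold qq
    have : (C (ε i) : MvPolynomial (Fin (n+1)) ℂ) ^ 2 = 1 := by
      rw [← map_pow, h2, map_one]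
    ring_nf
    rw [this]
    ring
  rw [this]
  exact Ideal.mul_mem_right _ _ (Ideal.subset_span ⟨i, rfl⟩)

/-- If all `qq i` lie in an ideal `I`, then elements of `Wspan n e` lie in `I ^ e`. -/
lemma Wspan_le_pow {n e : ℕ} {I : Ideal (MvPolynomial (Fin (n+1)) ℂ)}
    (hI : ∀ i : Fin n, qq n i ∈ I) {f} (hf : f ∈ Wspan n e) : f ∈ I ^ e := by
  induction hf using Submodule.span_induction with
  | mem f hf =>
    obtain ⟨a, β, δ, hδ, hβ, rfl⟩ := hf
    unfold Wgen
    rw [Finset.prod_mul_distrib]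
    have h1 : (∏ i, qq n i ^ β i) ∈ I ^ e := by
      refine Ideal.pow_le_pow_right hβ ?_
      simpa using prod_pow_mem I Finset.univ (qq n) (fun i _ => hI i) β
    rw [mul_comm (∏ i, qq n i ^ β i)] at *
    exact Ideal.mul_mem_left _ _ (Ideal.mul_mem_left _ _ h1)
  | zero => exact zero_mem _
  | add x y _ _ hx hy => exact add_mem hx hy
  | smul c x _ hx => by_cases h : c = 0 <;> simp [smul_eq_C_mul, h, Ideal.mul_mem_left _ _ hx]
open MvPolynomial

section Colon
variable (n : ℕ)

/-- degree in the variables other than `x₀` -/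
def Dg (m : Fin (n+2) →₀ ℕ) : ℕ := ∑ i : Fin (n+1), m i.succ

lemma Dg_add (m m' : Fin (n+2) →₀ ℕ) : Dg n (m + m') = Dg n m + Dg n m' := by
  unfold Dg; simp [Finset.sum_add_distrib]

lemma Dg_single_succ (i : Fin (n+1)) (k : ℕ) : Dg n (Finsupp.single i.succ k) = k := by
  unfold Dg
  rw [Finset.sum_eq_single i]
  · simp
  · intro b _ hb
    rw [Finsupp.single_apply, if_neg (by simpa [Fin.succ_inj, eq_comm] using hb)]
  · simp

lemma Dg_single_zero (k : ℕ) : Dg n (Finsupp.single (0 : Fin (n+2)) k) = 0 := by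
  unfold Dg
  refine Finset.sum_eq_zero fun i _ => ?_
  rw [Finsupp.single_apply, if_neg (Fin.succ_ne_zero i).symm]

/-- the irrelevant-style ideal generated by all variables except `x₀` -/
noncomputable def mP : Ideal (MvPolynomial (Fin (n+2)) ℂ) :=
  Ideal.span (Set.range fun i : Fin (n+1) => (X i.succ : MvPolynomial (Fin (n+2)) ℂ))

/-- the ideal of polynomials all whose monomials have `Dg ≥ d` -/
noncomputable def Nd (d : ℕ) : Ideal (MvPolynomial (Fin (n+2)) ℂ) where
  carrier := {u | ∀ m ∈ u.support, d ≤ Dg n m}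
  zero_mem' := by simp
  add_mem' := by
    classical
    intro a b ha hb m hm
    rcases Finset.mem_union.1 (MvPolynomial.support_add hm) with h | h
    exacts [ha m h, hb m h]
  smul_mem' := by
    classical
    intro c u hu m hm
    rw [smul_eq_mul] at hm
    obtain ⟨m1, h1, m2, h2, rfl⟩ := Finset.mem_add.1 (MvPolynomial.support_mul _ _ hm)
    have := hu m2 h2
    rw [Dg_add]; omega

lemma mem_Nd {d : ℕ} {u : MvPolynomial (Fin (n+2)) ℂ} :
    u ∈ Nd n d ↔ ∀ m ∈ u.support, d ≤ Dg n m := Iff.rfl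

lemma Nd_mul {a b : ℕ} {u v : MvPolynomial (Fin (n+2)) ℂ} (hu : u ∈ Nd n a) (hv : v ∈ Nd n b) :
    u * v ∈ Nd n (a + b) := by
  classical
  intro m hm
  obtain ⟨m1, h1, m2, h2, rfl⟩ := Finset.mem_add.1 (MvPolynomial.support_mul _ _ hm)
  have := hu m1 h1; have := hv m2 h2
  rw [Dg_add]; omega

lemma mP_pow_le (d : ℕ) : mP n ^ d ≤ Nd n d := by
  induction d with
  | zero => intro u _; intro m _; omega
  | succ d ih =>
    rw [pow_succ]
    refine Ideal.mul_le.2 fun u hu v hv => ?_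
    have h1 : mP n ≤ Nd n 1 := by
      rw [mP, Ideal.span_le]
      rintro v ⟨i, rfl⟩ m hm
      rw [MvPolynomial.support_X (R := ℂ)] at hm
      simp only [Finset.mem_singleton] at hm
      subst hm
      rw [Dg_single_succ]
    exact Nd_mul n (ih hu) (h1 hv)

lemma mem_mP_pow {d : ℕ} {u : MvPolynomial (Fin (n+2)) ℂ}
    (h : ∀ m ∈ u.support, d ≤ Dg n m) : u ∈ mP n ^ d := by
  classical
  rw [MvPolynomial.as_sum u]
  refine Ideal.sum_mem _ fun m hm => ?_
  rw [MvPolynomial.monomial_eq, Finsupp.prod_pow, Fin.prod_univ_succ]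
  refine Ideal.mul_mem_left _ _ (Ideal.mul_mem_left _ _ ?_)
  refine Ideal.pow_le_pow_right (h m hm) ?_
  have := prod_pow_mem (mP n) Finset.univ (fun i : Fin (n+1) => X i.succ)
    (fun i _ => Ideal.subset_span ⟨i, rfl⟩) (fun i => m i.succ)
  exact this
open MvPolynomial

section Colon2
variable (n : ℕ)

lemma D2 {d : ℕ} {u : MvPolynomial (Fin (n+2)) ℂ} {i : Fin (n+1)}
    (h : X i.succ * u ∈ mP n ^ d) : u ∈ mP n ^ (d - 1) := by
  classical
  refine mem_mP_pow n fun m hm => ?_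
  have hc : coeff (Finsupp.single i.succ 1 + m) (X i.succ * u) = coeff m u :=
    MvPolynomial.coeff_X_mul m i.succ u
  have hmem : (Finsupp.single i.succ 1 + m) ∈ (X i.succ * u).support := by
    rw [MvPolynomial.mem_support_iff, hc]
    exact MvPolynomial.mem_support_iff.1 hm
  have := mP_pow_le n d h _ hmem
  rw [Dg_add, Dg_single_succ] at this
  omega

lemma D1 {d : ℕ} {c : ℂ} (hc : c ≠ 0) {u : MvPolynomial (Fin (n+2)) ℂ} {i : Fin (n+1)}
    (h : (X i.succ + C c * X 0) * u ∈ mP n ^ d) : u ∈ mP n ^ d := by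
  classical
  refine mem_mP_pow n fun m hm => ?_
  by_contra hlt
  push_neg at hlt
  -- pick a monomial of minimal Dg in the support of u
  obtain ⟨m₀, hm₀, hmin⟩ := Finset.exists_min_image u.support (Dg n) ⟨m, hm⟩
  have hm₀lt : Dg n m₀ < d := lt_of_le_of_lt (hmin m hm) hlt
  set m₁ := Finsupp.single (0 : Fin (n+2)) 1 + m₀ with hm₁def
  have hDm₁ : Dg n m₁ = Dg n m₀ := by rw [Dg_add, Dg_single_zero, zero_add]
  -- the coefficient of m₁ in (X i.succ)*u vanishes
  have hXpart : coeff m₁ (X i.succ * u) = 0 := by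
    rw [MvPolynomial.coeff_X_mul']
    split_ifs with hmem
    · -- m₁ - single i.succ 1 would have smaller Dg
      rw [Finsupp.mem_support_iff] at hmem
      refine MvPolynomial.notMem_support_iff.1 fun hsup => ?_
      have hle : Finsupp.single i.succ 1 ≤ m₁ := by
        rw [Finsupp.single_le_iff]
        omega
      have hsplit : m₁ - Finsupp.single i.succ 1 + Finsupp.single i.succ 1 = m₁ :=
        tsub_add_cancel_of_le hle
      have : Dg n (m₁ - Finsupp.single i.succ 1) + 1 = Dg n m₀ := by
        have := congrArg (Dg n) hsplit
        rw [Dg_add, Dg_single_succ] at this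
        omega
      have := hmin _ hsup
      omega
    · rfl
  have hcoeff : coeff m₁ ((X i.succ + C c * X 0) * u) = c * coeff m₀ u := by
    rw [add_mul, MvPolynomial.coeff_add, hXpart, zero_add, mul_assoc,
      MvPolynomial.coeff_C_mul, hm₁def, MvPolynomial.coeff_X_mul]
  have hne : coeff m₁ ((X i.succ + C c * X 0) * u) ≠ 0 := by
    rw [hcoeff]
    exact mul_ne_zero hc (MvPolynomial.mem_support_iff.1 hm₀)
  have := mP_pow_le n d h m₁ (MvPolynomial.mem_support_iff.2 hne)
  omega

/-- the translation x_i ↦ x_i + ε_i x_0 -/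
noncomputable def Tr (ε : Fin (n+1) → ℂ) :
    MvPolynomial (Fin (n+2)) ℂ →ₐ[ℂ] MvPolynomial (Fin (n+2)) ℂ :=
  MvPolynomial.aeval (fun k : Fin (n+2) =>
    Fin.cases (X 0) (fun i => X i.succ + C (ε i) * X 0) k)

noncomputable def Tr' (ε : Fin (n+1) → ℂ) :
    MvPolynomial (Fin (n+2)) ℂ →ₐ[ℂ] MvPolynomial (Fin (n+2)) ℂ :=
  MvPolynomial.aeval (fun k : Fin (n+2) =>
    Fin.cases (X 0) (fun i => X i.succ - C (ε i) * X 0) k)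

lemma Tr_X_succ (ε : Fin (n+1) → ℂ) (i : Fin (n+1)) :
    Tr n ε (X i.succ) = X i.succ + C (ε i) * X 0 := by
  rw [Tr, aeval_X, Fin.cases_succ]

lemma Tr_X_zero (ε : Fin (n+1) → ℂ) : Tr n ε (X 0) = X 0 := by
  rw [Tr, aeval_X]; rfl

lemma Tr'_X_succ (ε : Fin (n+1) → ℂ) (i : Fin (n+1)) :
    Tr' n ε (X i.succ) = X i.succ - C (ε i) * X 0 := by
  rw [Tr', aeval_X, Fin.cases_succ]

lemma Tr'_X_zero (ε : Fin (n+1) → ℂ) : Tr' n ε (X 0) = X 0 := by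
  rw [Tr', aeval_X]; rfl

lemma Tr'_comp_Tr (ε : Fin (n+1) → ℂ) (f : MvPolynomial (Fin (n+2)) ℂ) :
    Tr' n ε (Tr n ε f) = f := by
  have : (Tr' n ε).comp (Tr n ε) = AlgHom.id ℂ _ := by
    apply MvPolynomial.algHom_ext
    intro k
    induction k using Fin.cases with
    | zero => simp [Tr_X_zero, Tr'_X_zero]
    | succ i =>
      rw [AlgHom.comp_apply, Tr_X_succ, map_add, map_mul, Tr'_X_succ, Tr'_X_zero]
      have : (Tr' n ε) (C (ε i)) = C (ε i) := by
        rw [Tr', ← MvPolynomial.algebraMap_eq, AlgHom.commutes, MvPolynomial.algebraMap_eq]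
      rw [this]
      simp
  calc Tr' n ε (Tr n ε f) = ((Tr' n ε).comp (Tr n ε)) f := rfl
  _ = f := by rw [this]; rfl

lemma Tr_pIdeal (ε : Fin (n+1) → ℂ) :
    Ideal.map (Tr n ε) (pIdeal (n+1) ε) ≤ mP n := by
  rw [pIdeal_eq, Ideal.map_span]
  rw [Ideal.span_le]
  rintro v ⟨w, ⟨i, rfl⟩, rfl⟩
  have h1 : (Tr n ε) (X i.succ - C (ε i) * X (0:Fin (n+2))) = X i.succ := by
    rw [map_sub, map_mul, Tr_X_succ, Tr_X_zero]
    have : (Tr n ε) (C (ε i)) = C (ε i) := by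
      rw [Tr, ← MvPolynomial.algebraMap_eq, AlgHom.commutes, MvPolynomial.algebraMap_eq]
    rw [this]; ring
  show (Tr n ε) (X i.succ - C (ε i) * X (0:Fin (n+2))) ∈ mP n
  rw [h1]
  exact Ideal.subset_span ⟨i, rfl⟩

lemma Tr'_mP (ε : Fin (n+1) → ℂ) :
    Ideal.map (Tr' n ε) (mP n) ≤ pIdeal (n+1) ε := by
  rw [mP, Ideal.map_span, Ideal.span_le]
  rintro v ⟨w, ⟨i, rfl⟩, rfl⟩
  show (Tr' n ε) (X i.succ) ∈ pIdeal (n+1) ε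
  rw [Tr'_X_succ]
  exact Ideal.subset_span ⟨i, rfl⟩

/-- The key colon property: dividing by the last quadric drops the power by one. -/
lemma colon_lemma (ε : Fin (n+1) → ℂ) (hε : ∀ i, ε i = 1 ∨ ε i = -1) (d : ℕ)
    (w : MvPolynomial (Fin (n+2)) ℂ)
    (h : qq (n+1) (Fin.last n) * w ∈ pIdeal (n+1) ε ^ d) :
    w ∈ pIdeal (n+1) ε ^ (d - 1) := by
  set s := ε (Fin.last n) with hs
  have hs2 : s ^ 2 = 1 := by rcases hε (Fin.last n) with h | h <;> rw [hs, h] <;> ring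
  set L := (Fin.last n).succ with hL
  have hTq : Tr n ε (qq (n+1) (Fin.last n)) =
      (X L + C (2*s) * X 0) * (X L * (1:MvPolynomial (Fin (n+2)) ℂ)) := by
    rw [qq, map_sub, map_pow, map_pow, Tr_X_succ, Tr_X_zero]
    have hCs : (C s : MvPolynomial (Fin (n+2)) ℂ) ^ 2 = 1 := by
      rw [← map_pow, hs2, map_one]
    have : (C (2*s) : MvPolynomial (Fin (n+2)) ℂ) = 2 * C s := by
      have h2s : (2:ℂ)*s = s + s := by ring
      rw [h2s, map_add, ← two_mul]
    rw [this]
    ring_nf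
    rw [hCs]
    ring
  have hmem : Tr n ε (qq (n+1) (Fin.last n) * w) ∈ mP n ^ d := by
    have h1 : Tr n ε (qq (n+1) (Fin.last n) * w) ∈ Ideal.map (Tr n ε) (pIdeal (n+1) ε ^ d) :=
      Ideal.mem_map_of_mem _ h
    rw [Ideal.map_pow] at h1
    exact Ideal.pow_right_mono (Tr_pIdeal n ε) d h1
  rw [map_mul, hTq, mul_one, mul_assoc] at hmem
  have h2 : X L * Tr n ε w ∈ mP n ^ d := D1 n (by
    intro hc
    rcases hε (Fin.last n) with h | h <;> rw [← hs] at h <;> rw [h] at hc <;> norm_num at hc) hmem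
  have h3 : Tr n ε w ∈ mP n ^ (d-1) := D2 n h2
  have h4 : Tr' n ε (Tr n ε w) ∈ Ideal.map (Tr' n ε) (mP n ^ (d-1)) :=
    Ideal.mem_map_of_mem _ h3
  rw [Tr'_comp_Tr, Ideal.map_pow] at h4
  exact Ideal.pow_right_mono (Tr'_mP n ε) (d-1) h4

end Colon2
open MvPolynomial

section Psi
variable (n : ℕ)

/-- separate the last variable -/
noncomputable def Psi : MvPolynomial (Fin (n+2)) ℂ ≃ₐ[ℂ]
    Polynomial (MvPolynomial (Fin (n+1)) ℂ) :=
  (renameEquiv ℂ (finSuccEquiv' (Fin.last (n+1)))).trans (optionEquivLeft ℂ (Fin (n+1)))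

lemma Psi_X_last : Psi n (X (Fin.last (n+1))) = Polynomial.X := by
  rw [Psi, AlgEquiv.trans_apply, renameEquiv_apply, rename_X, finSuccEquiv'_at,
    optionEquivLeft_X_none]

lemma Psi_X_castSucc (j : Fin (n+1)) :
    Psi n (X j.castSucc) = Polynomial.C (X j) := by
  rw [Psi, AlgEquiv.trans_apply, renameEquiv_apply, rename_X,
    finSuccEquiv'_last_apply_castSucc, optionEquivLeft_X_some]

lemma Psi_X_zero : Psi n (X 0) = Polynomial.C (X 0) := by
  have : (0 : Fin (n+2)) = Fin.castSucc 0 := rfl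
  rw [this, Psi_X_castSucc]

lemma Psi_C (c : ℂ) : Psi n (C c) = Polynomial.C (C c) := by
  rw [Psi, AlgEquiv.trans_apply, renameEquiv_apply, rename_C, optionEquivLeft_C]

lemma Psi_X_succ_castSucc (j : Fin n) :
    Psi n (X (j.castSucc).succ) = Polynomial.C (X j.succ) := by
  rw [Fin.succ_castSucc, Psi_X_castSucc]

lemma Psi_X_succ_last : Psi n (X (Fin.last n).succ) = Polynomial.X := by
  rw [Fin.succ_last, Psi_X_last]

noncomputable def qB : Polynomial (MvPolynomial (Fin (n+1)) ℂ) :=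
  Polynomial.X ^ 2 - Polynomial.C ((X 0 : MvPolynomial (Fin (n+1)) ℂ) ^ 2)

lemma Psi_qq_last : Psi n (qq (n+1) (Fin.last n)) = qB n := by
  rw [qq, qB, map_sub, map_pow, map_pow, Psi_X_succ_last, Psi_X_zero, ← map_pow]

lemma Psi_qq_castSucc (j : Fin n) :
    Psi n (qq (n+1) j.castSucc) = Polynomial.C (qq n j) := by
  rw [qq, qq, map_sub, map_pow, map_pow, Psi_X_succ_castSucc, Psi_X_zero,
    ← map_pow, ← map_pow, ← map_sub]

lemma Psi_Wgen (a : ℕ) (β δ : Fin (n+1) → ℕ) :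
    Psi n (Wgen (n+1) a β δ) =
      Polynomial.C (Wgen n a (β ∘ Fin.castSucc) (δ ∘ Fin.castSucc)) *
        qB n ^ (β (Fin.last n)) * Polynomial.X ^ (δ (Fin.last n)) := by
  rw [Wgen, Wgen, map_mul, map_pow, Psi_X_zero, map_prod, Fin.prod_univ_castSucc]
  simp only [map_mul, map_pow, Psi_qq_castSucc, Psi_X_succ_castSucc, Psi_qq_last,
    Psi_X_succ_last]
  rw [map_prod]
  simp only [map_mul, map_pow, Function.comp_apply]
  ring
open MvPolynomial

section WB
variable (n : ℕ)

def WBSet (e : ℕ) : Set (Polynomial (MvPolynomial (Fin (n+1)) ℂ)) :=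
  {v | ∃ b eX a β δ, eX ≤ 1 ∧ (∀ i, δ i ≤ 1) ∧ e ≤ b + ∑ i, β i ∧
    v = Polynomial.C (Wgen n a β δ) * qB n ^ b * Polynomial.X ^ eX}

noncomputable def WB (e : ℕ) : Submodule ℂ (Polynomial (MvPolynomial (Fin (n+1)) ℂ)) :=
  Submodule.span ℂ (WBSet n e)

lemma image_WgenSet (e : ℕ) :
    (Psi n) '' (WgenSet (n+1) e) = WBSet n e := by
  ext v
  constructor
  · rintro ⟨f, ⟨a, β, δ, hδ, hβ, rfl⟩, rfl⟩
    refine ⟨β (Fin.last n), δ (Fin.last n), a, β ∘ Fin.castSucc, δ ∘ Fin.castSucc,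
      hδ _, fun i => hδ _, ?_, Psi_Wgen n a β δ⟩
    rw [Fin.sum_univ_castSucc] at hβ
    have : ∑ i : Fin n, (β ∘ Fin.castSucc) i = ∑ i : Fin n, β i.castSucc := rfl
    omega
  · rintro ⟨b, eX, a, β, δ, heX, hδ, hβ, rfl⟩
    refine ⟨Wgen (n+1) a (Fin.snoc β b) (Fin.snoc δ eX), ⟨a, _, _, ?_, ?_, rfl⟩, ?_⟩
    · intro i
      induction i using Fin.lastCases with
      | last => rw [Fin.snoc_last]; exact heX
      | cast j => rw [Fin.snoc_castSucc]; exact hδ j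
    · rw [Fin.sum_univ_castSucc, Fin.snoc_last]
      simp only [Fin.snoc_castSucc]
      omega
    · have hb : Fin.snoc β b ∘ Fin.castSucc = β := funext fun j => by simp
      have hd : Fin.snoc δ eX ∘ Fin.castSucc = δ := funext fun j => by simp
      rw [Psi_Wgen, hb, hd, Fin.snoc_last, Fin.snoc_last]

lemma mem_Wspan_iff (e : ℕ) (f : MvPolynomial (Fin (n+2)) ℂ) :
    f ∈ Wspan (n+1) e ↔ Psi n f ∈ WB n e := by
  have hmap : Submodule.map ((Psi n).toLinearEquiv : _ ≃ₗ[ℂ] _).toLinearMap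
      (Wspan (n+1) e) = WB n e := by
    rw [Wspan, Submodule.map_span, WB]
    congr 1
    exact image_WgenSet n e
  constructor
  · intro hf
    rw [← hmap]
    exact Submodule.mem_map_of_mem hf
  · intro hf
    rw [← hmap] at hf
    obtain ⟨g, hg, hgf⟩ := hf
    have : g = f := (Psi n).injective hgf
    rwa [← this]

lemma WB_anti {e e' : ℕ} (h : e ≤ e') : WB n e' ≤ WB n e := by
  apply Submodule.span_mono
  rintro v ⟨b, eX, a, β, δ, heX, hδ, hβ, rfl⟩
  exact ⟨b, eX, a, β, δ, heX, hδ, by omega, rfl⟩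

lemma qB_mul_WB {e : ℕ} {v} (hv : v ∈ WB n e) : qB n * v ∈ WB n (e+1) := by
  induction hv using Submodule.span_induction with
  | mem v hv =>
    obtain ⟨b, eX, a, β, δ, heX, hδ, hβ, rfl⟩ := hv
    refine Submodule.subset_span ⟨b+1, eX, a, β, δ, heX, hδ, by omega, by ring⟩
  | zero => simpa using zero_mem _
  | add x y _ _ hx hy => rw [mul_add]; exact add_mem hx hy
  | smul c x _ hx => rw [mul_smul_comm]; exact Submodule.smul_mem _ _ hx

lemma C_mul_X_mem_WB {e : ℕ} {w} (hw : w ∈ Wspan n e) {eX : ℕ} (heX : eX ≤ 1) :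
    Polynomial.C w * Polynomial.X ^ eX ∈ WB n e := by
  induction hw using Submodule.span_induction with
  | mem w hw =>
    obtain ⟨a, β, δ, hδ, hβ, rfl⟩ := hw
    exact Submodule.subset_span ⟨0, eX, a, β, δ, heX, hδ, by omega, by ring⟩
  | zero => simpa using zero_mem _
  | add x y _ _ hx hy => rw [map_add, add_mul]; exact add_mem hx hy
  | smul c x _ hx =>
    rw [← Polynomial.smul_C, smul_mul_assoc]
    exact Submodule.smul_mem _ _ hx
open MvPolynomial

section Div
variable (n : ℕ)

lemma qB_monic : (qB n).Monic := Polynomial.monic_X_pow_sub_C _ two_ne_zero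

lemma qB_ne_zero : qB n ≠ 0 := (qB_monic n).ne_zero

lemma qB_deg : (qB n).degree = 2 := Polynomial.degree_X_pow_sub_C (by norm_num) _

variable {n}

lemma mod_add (u v : Polynomial (MvPolynomial (Fin (n+1)) ℂ)) :
    (u + v) %ₘ qB n = u %ₘ qB n + v %ₘ qB n := Polynomial.add_modByMonic u v

lemma mod_smul (c : ℂ) (v : Polynomial (MvPolynomial (Fin (n+1)) ℂ)) :
    (c • v) %ₘ qB n = c • (v %ₘ qB n) := by
  have h1 : c • v = (C c : MvPolynomial (Fin (n+1)) ℂ) • v := by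
    rw [← MvPolynomial.algebraMap_eq, algebraMap_smul]
  have h2 : c • (v %ₘ qB n) = (C c : MvPolynomial (Fin (n+1)) ℂ) • (v %ₘ qB n) := by
    rw [← MvPolynomial.algebraMap_eq, algebraMap_smul]
  rw [h1, h2, Polynomial.smul_modByMonic]

lemma div_add (u v : Polynomial (MvPolynomial (Fin (n+1)) ℂ)) :
    (u + v) /ₘ qB n = u /ₘ qB n + v /ₘ qB n := by
  have h := Polynomial.modByMonic_add_div (u + v) (qB n)
  have hu := Polynomial.modByMonic_add_div u (qB n)
  have hv := Polynomial.modByMonic_add_div v (qB n)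
  have hadd := mod_add u v
  apply mul_left_cancel₀ (qB_ne_zero n)
  linear_combination h - hu - hv - hadd

lemma div_smul (c : ℂ) (v : Polynomial (MvPolynomial (Fin (n+1)) ℂ)) :
    (c • v) /ₘ qB n = c • (v /ₘ qB n) := by
  have h := Polynomial.modByMonic_add_div (c • v) (qB n)
  have hv := Polynomial.modByMonic_add_div v (qB n)
  have hs := mod_smul c v
  apply mul_left_cancel₀ (qB_ne_zero n)
  have hv' := congrArg (c • ·) hv
  simp only [smul_add, smul_eq_mul] at hv'
  rw [mul_smul_comm]
  linear_combination h - hv' - hs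

lemma WB_extract {e : ℕ} {v} (hv : v ∈ WB n e) :
    (v %ₘ qB n).coeff 0 ∈ Wspan n e ∧ (v %ₘ qB n).coeff 1 ∈ Wspan n e ∧
      v /ₘ qB n ∈ WB n (e-1) := by
  induction hv using Submodule.span_induction with
  | mem v hv =>
    obtain ⟨b, eX, a, β, δ, heX, hδ, hβ, rfl⟩ := hv
    cases b with
    | zero =>
      rw [pow_zero, mul_one]
      have hdeg : (Polynomial.C (Wgen n a β δ) * Polynomial.X ^ eX).degree < 2 := by
        refine lt_of_le_of_lt (Polynomial.degree_mul_le _ _) ?_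
        have h1 : (Polynomial.C (Wgen n a β δ)).degree ≤ 0 := Polynomial.degree_C_le
        have h2 : (Polynomial.X ^ eX :
            Polynomial (MvPolynomial (Fin (n+1)) ℂ)).degree ≤ 1 := by
          rw [Polynomial.degree_X_pow]
          exact_mod_cast heX
        calc (Polynomial.C (Wgen n a β δ)).degree + (Polynomial.X ^ eX :
            Polynomial (MvPolynomial (Fin (n+1)) ℂ)).degree ≤ 0 + 1 := add_le_add h1 h2
        _ < 2 := by norm_num
      have hmod := (Polynomial.modByMonic_eq_self_iff (qB_monic n)
        (p := Polynomial.C (Wgen n a β δ) * Polynomial.X ^ eX)).2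
        (by rw [qB_deg n]; exact hdeg)
      have hdiv := (Polynomial.divByMonic_eq_zero_iff (qB_monic n)
        (p := Polynomial.C (Wgen n a β δ) * Polynomial.X ^ eX)).2
        (by rw [qB_deg n]; exact hdeg)
      rw [hmod, hdiv]
      refine ⟨?_, ?_, zero_mem _⟩ <;> interval_cases eX <;>
        simp only [pow_zero, mul_one, pow_one, Polynomial.coeff_C_mul, Polynomial.coeff_C,
          Polynomial.coeff_X_zero, Polynomial.coeff_X_one, mul_zero, mul_one] <;>
        first
          | exact Submodule.subset_span ⟨a, β, δ, hδ, by omega, rfl⟩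
          | simp [zero_mem]
    | succ b' =>
      have hv : Polynomial.C (Wgen n a β δ) * qB n ^ (b'+1) * Polynomial.X ^ eX =
          qB n * (Polynomial.C (Wgen n a β δ) * qB n ^ b' * Polynomial.X ^ eX) := by ring
      rw [hv]
      have hmod : (qB n * (Polynomial.C (Wgen n a β δ) * qB n ^ b' * Polynomial.X ^ eX)) %ₘ
          qB n = 0 :=
        (Polynomial.modByMonic_eq_zero_iff_dvd (qB_monic n)).2 ⟨_, rfl⟩
      have hdiv := Polynomial.mul_divByMonic_cancel_left
        (Polynomial.C (Wgen n a β δ) * qB n ^ b' * Polynomial.X ^ eX) (qB_monic n)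
      rw [hmod, hdiv]
      refine ⟨by simp [zero_mem], by simp [zero_mem], ?_⟩
      exact Submodule.subset_span ⟨b', eX, a, β, δ, heX, hδ, by omega, rfl⟩
  | zero =>
    rw [Polynomial.zero_modByMonic, Polynomial.zero_divByMonic]
    simp [zero_mem]
  | add x y _ _ hx hy =>
    rw [mod_add, div_add, Polynomial.coeff_add, Polynomial.coeff_add]
    exact ⟨add_mem hx.1 hy.1, add_mem hx.2.1 hy.2.1, add_mem hx.2.2 hy.2.2⟩
  | smul c x _ hx =>
    rw [mod_smul, div_smul, Polynomial.coeff_smul, Polynomial.coeff_smul]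
    exact ⟨Submodule.smul_mem _ _ hx.1, Submodule.smul_mem _ _ hx.2.1,
      Submodule.smul_mem _ _ hx.2.2⟩

lemma reconstruct (v : Polynomial (MvPolynomial (Fin (n+1)) ℂ)) :
    v = Polynomial.C ((v %ₘ qB n).coeff 0) + Polynomial.C ((v %ₘ qB n).coeff 1) * Polynomial.X
      + qB n * (v /ₘ qB n) := by
  have h := Polynomial.modByMonic_add_div v (qB n)
  have hdeg : (v %ₘ qB n).degree ≤ 1 := by
    have hlt := Polynomial.degree_modByMonic_lt v (qB_monic n)
    rw [qB_deg n] at hlt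
    rw [Polynomial.degree_le_iff_coeff_zero]
    intro m hm
    refine Polynomial.coeff_eq_zero_of_degree_lt (lt_of_lt_of_le hlt ?_)
    exact_mod_cast hm
  have hX := Polynomial.eq_X_add_C_of_degree_le_one hdeg
  conv_lhs => rw [← h, hX]
  ring
open MvPolynomial

section KHelpers
variable (n : ℕ)

lemma Psi_rename (w : MvPolynomial (Fin (n+1)) ℂ) :
    Psi n (rename Fin.castSucc w) = Polynomial.C w := by
  have h : (Psi n).toAlgHom.comp (rename (R := ℂ) Fin.castSucc) =
      Polynomial.CAlgHom (R := ℂ) := by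
    apply MvPolynomial.algHom_ext
    intro j
    simp only [AlgHom.comp_apply, AlgEquiv.toAlgHom_eq_coe, AlgHom.coe_coe, rename_X]
    refine (Psi_X_castSucc n j).trans ?_
    rfl
  exact DFunLike.congr_fun h w

lemma rename_pIdeal (ε : Fin (n+1) → ℂ) (d : ℕ) {g : MvPolynomial (Fin (n+1)) ℂ}
    (hg : g ∈ pIdeal n (ε ∘ Fin.castSucc) ^ d) :
    rename Fin.castSucc g ∈ pIdeal (n+1) ε ^ d := by
  have hmap : Ideal.map (rename (R := ℂ) Fin.castSucc :
        MvPolynomial (Fin (n+1)) ℂ →ₐ[ℂ] MvPolynomial (Fin (n+2)) ℂ).toRingHom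
      (pIdeal n (ε ∘ Fin.castSucc)) ≤ pIdeal (n+1) ε := by
    rw [pIdeal_eq, Ideal.map_span, Ideal.span_le]
    rintro v ⟨w, ⟨j, rfl⟩, rfl⟩
    show (rename Fin.castSucc) (X j.succ - C ((ε ∘ Fin.castSucc) j) * X 0) ∈ pIdeal (n+1) ε
    rw [map_sub, map_mul, rename_X, rename_X, rename_C]
    rw [← Fin.succ_castSucc]
    have h0 : Fin.castSucc (0 : Fin (n+1)) = (0 : Fin (n+2)) := rfl
    rw [h0]
    exact Ideal.subset_span ⟨j.castSucc, rfl⟩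
  have h1 : rename Fin.castSucc g ∈
      Ideal.map (rename (R := ℂ) Fin.castSucc :
        MvPolynomial (Fin (n+1)) ℂ →ₐ[ℂ] MvPolynomial (Fin (n+2)) ℂ).toRingHom
      (pIdeal n (ε ∘ Fin.castSucc) ^ d) := Ideal.mem_map_of_mem _ hg
  rw [Ideal.map_pow] at h1
  exact Ideal.pow_right_mono hmap d h1

lemma eval_Psi_mem (ε : Fin (n+1) → ℂ) (d : ℕ) {f : MvPolynomial (Fin (n+2)) ℂ}
    (hf : f ∈ pIdeal (n+1) ε ^ d) :
    Polynomial.eval (C (ε (Fin.last n)) * X 0) (Psi n f) ∈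
      pIdeal n (ε ∘ Fin.castSucc) ^ d := by
  set s := ε (Fin.last n) with hs
  let χ : MvPolynomial (Fin (n+2)) ℂ →+* MvPolynomial (Fin (n+1)) ℂ :=
    (Polynomial.evalRingHom (C s * X 0)).comp (Psi n).toAlgHom.toRingHom
  have hmap : Ideal.map χ (pIdeal (n+1) ε) ≤ pIdeal n (ε ∘ Fin.castSucc) := by
    rw [pIdeal_eq, Ideal.map_span, Ideal.span_le]
    rintro v ⟨w, ⟨i, rfl⟩, rfl⟩
    show χ (X i.succ - C (ε i) * X 0) ∈ pIdeal n (ε ∘ Fin.castSucc)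
    have hχ : ∀ u, χ u = Polynomial.eval (C s * X 0) (Psi n u) := fun u => rfl
    rw [hχ, map_sub, map_mul, Psi_C, Psi_X_zero]
    induction i using Fin.lastCases with
    | last =>
      rw [Psi_X_succ_last]
      simp only [Polynomial.eval_sub, Polynomial.eval_X, Polynomial.eval_mul,
        Polynomial.eval_C, ← hs]
      rw [sub_self]
      exact zero_mem _
    | cast j =>
      rw [Psi_X_succ_castSucc]
      simp only [Polynomial.eval_sub, Polynomial.eval_mul, Polynomial.eval_C]
      exact Ideal.subset_span ⟨j, rfl⟩
  have h1 : χ f ∈ Ideal.map χ (pIdeal (n+1) ε ^ d) := Ideal.mem_map_of_mem _ hf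
  rw [Ideal.map_pow] at h1
  exact Ideal.pow_right_mono hmap d h1

end KHelpers
open MvPolynomial

lemma div_smulA {n : ℕ} (r : MvPolynomial (Fin (n+1)) ℂ)
    (v : Polynomial (MvPolynomial (Fin (n+1)) ℂ)) :
    (r • v) /ₘ qB n = r • (v /ₘ qB n) := by
  have h := Polynomial.modByMonic_add_div (r • v) (qB n)
  have hv := Polynomial.modByMonic_add_div v (qB n)
  have hs : (r • v) %ₘ qB n = r • (v %ₘ qB n) := Polynomial.smul_modByMonic r v
  apply mul_left_cancel₀ (qB_ne_zero n)
  have hv' := congrArg (r • ·) hv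
  simp only [smul_add] at hv'
  rw [mul_smul_comm]
  simp only [← Polynomial.C_mul'] at h hv' hs ⊢
  linear_combination h - hv' - hs

theorem package (n : ℕ) :
    (∀ f : MvPolynomial (Fin (n+1)) ℂ, f ∈ Wspan n 0) ∧
    (∀ (e : ℕ) (f : MvPolynomial (Fin (n+1)) ℂ), X 0 * f ∈ Wspan n e → f ∈ Wspan n e) ∧
    (∀ (d : ℕ) (f : MvPolynomial (Fin (n+1)) ℂ),
      (∀ ε : Fin n → ℂ, (∀ i, ε i = 1 ∨ ε i = -1) → f ∈ pIdeal n ε ^ d) →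
        f ∈ Wspan n d) := by
  induction n with
  | zero =>
    have hE0 : ∀ f : MvPolynomial (Fin 1) ℂ, f ∈ Wspan 0 0 := by
      have hone : (1 : MvPolynomial (Fin 1) ℂ) ∈ WgenSet 0 0 :=
        ⟨0, 0, 0, fun i => i.elim0, by simp, by simp [Wgen]⟩
      intro f
      induction f using MvPolynomial.induction_on with
      | C c =>
        have hc : C c = c • (1 : MvPolynomial (Fin 1) ℂ) := by
          rw [smul_eq_C_mul, mul_one]
        rw [hc]
        exact Submodule.smul_mem _ _ (Submodule.subset_span hone)
      | add p q hp hq => exact add_mem hp hq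
      | mul_X p i hp =>
        have hi : i = 0 := Subsingleton.elim i 0
        subst hi
        induction hp using Submodule.span_induction with
        | mem g hg =>
          obtain ⟨a, β, δ, hδ, hβ, rfl⟩ := hg
          refine Submodule.subset_span ⟨a+1, β, δ, hδ, hβ, ?_⟩
          rw [Wgen, Wgen]
          simp [pow_succ]
        | zero => rw [zero_mul]; exact zero_mem _
        | add x y _ _ hx hy => rw [add_mul]; exact add_mem hx hy
        | smul c x _ hx => rw [smul_mul_assoc]; exact Submodule.smul_mem _ _ hx
    refine ⟨hE0, ?_, ?_⟩
    · intro e f hf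
      cases e with
      | zero => exact hE0 f
      | succ e =>
        have hempty : WgenSet 0 (e+1) = ∅ := by
          rw [Set.eq_empty_iff_forall_notMem]
          rintro g ⟨a, β, δ, _, hβ, _⟩
          simp at hβ
        rw [Wspan, hempty, Submodule.span_empty, Submodule.mem_bot] at hf ⊢
        rcases mul_eq_zero.1 hf with h | h
        · exact absurd h (MvPolynomial.X_ne_zero 0)
        · exact h
    · intro d f hdf
      cases d with
      | zero => exact hE0 f
      | succ d =>
        have h := hdf (fun _ => 1) (fun i => i.elim0)
        have hbot : pIdeal 0 (fun _ => 1) = ⊥ := by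
          rw [pIdeal]
          have hset : {p : MvPolynomial (Fin 1) ℂ |
              ∃ i : Fin 0, p = X i.succ - C ((fun _ => (1:ℂ)) i) * X 0} = ∅ := by
            rw [Set.eq_empty_iff_forall_notMem]
            rintro p ⟨i, _⟩
            exact i.elim0
          rw [hset, Ideal.span_empty]
        rw [hbot] at h
        have hb : (⊥ : Ideal (MvPolynomial (Fin 1) ℂ)) ^ (d+1) = ⊥ := by
          rw [← Ideal.zero_eq_bot, zero_pow (Nat.succ_ne_zero d)]
        rw [hb, Ideal.mem_bot] at h
        rw [h]
        exact zero_mem _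
  | succ n ih =>
    obtain ⟨ihE, ihS, ihK⟩ := ih
    have hnatq : (qB n).natDegree = 2 := Polynomial.natDegree_X_pow_sub_C
    -- E (n+1), on the polynomial side
    have hWB0 : ∀ v : Polynomial (MvPolynomial (Fin (n+1)) ℂ), v ∈ WB n 0 := by
      have key : ∀ N (v : Polynomial (MvPolynomial (Fin (n+1)) ℂ)),
          v.natDegree ≤ N → v ∈ WB n 0 := by
        intro N
        induction N with
        | zero =>
          intro v hv
          have hdiv : v /ₘ qB n = 0 := by
            refine (Polynomial.divByMonic_eq_zero_iff (qB_monic n)).2 ?_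
            rw [qB_deg n]
            refine lt_of_le_of_lt Polynomial.degree_le_natDegree ?_
            have h0 : v.natDegree = 0 := Nat.le_zero.1 hv
            rw [h0]
            norm_num
          have hrec := reconstruct v
          rw [hdiv, mul_zero, add_zero] at hrec
          rw [hrec]
          refine add_mem ?_ ?_
          · have := C_mul_X_mem_WB n (ihE ((v %ₘ qB n).coeff 0)) (Nat.zero_le 1)
            simpa using this
          · have := C_mul_X_mem_WB n (ihE ((v %ₘ qB n).coeff 1)) (le_refl 1)
            simpa using this
        | succ N ihN =>
          intro v hv
          have hrec := reconstruct v
          rw [hrec]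
          refine add_mem (add_mem ?_ ?_) ?_
          · have := C_mul_X_mem_WB n (ihE ((v %ₘ qB n).coeff 0)) (Nat.zero_le 1)
            simpa using this
          · have := C_mul_X_mem_WB n (ihE ((v %ₘ qB n).coeff 1)) (le_refl 1)
            simpa using this
          · have hdg : (v /ₘ qB n).natDegree ≤ N := by
              rw [Polynomial.natDegree_divByMonic v (qB_monic n), hnatq]
              omega
            exact WB_anti n (Nat.zero_le 1) (qB_mul_WB n (ihN _ hdg))
      exact fun v => key v.natDegree v le_rfl
    have hE1 : ∀ f : MvPolynomial (Fin (n+2)) ℂ, f ∈ Wspan (n+1) 0 :=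
      fun f => (mem_Wspan_iff n 0 f).2 (hWB0 _)
    -- S (n+1)
    have hSB : ∀ (e : ℕ) (v : Polynomial (MvPolynomial (Fin (n+1)) ℂ)),
        Polynomial.C (X 0) * v ∈ WB n e → v ∈ WB n e := by
      intro e
      induction e with
      | zero => intro v _; exact hWB0 v
      | succ e ihe =>
        intro v hv
        rw [Polynomial.C_mul'] at hv
        obtain ⟨h0, h1, hdivm⟩ := WB_extract hv
        have hmods : ((X 0 : MvPolynomial (Fin (n+1)) ℂ) • v) %ₘ qB n =
            (X 0 : MvPolynomial (Fin (n+1)) ℂ) • (v %ₘ qB n) :=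
          Polynomial.smul_modByMonic _ v
        simp only [hmods, Polynomial.coeff_smul, smul_eq_mul] at h0 h1
        have hc0 := ihS (e+1) _ h0
        have hc1 := ihS (e+1) _ h1
        rw [div_smulA, ← Polynomial.C_mul'] at hdivm
        have hdiv := ihe _ (by simpa using hdivm)
        have hrec := reconstruct v
        rw [hrec]
        refine add_mem (add_mem ?_ ?_) ?_
        · simpa using C_mul_X_mem_WB n hc0 (Nat.zero_le 1)
        · simpa using C_mul_X_mem_WB n hc1 (le_refl 1)
        · exact qB_mul_WB n hdiv
    have hS1 : ∀ (e : ℕ) (f : MvPolynomial (Fin (n+2)) ℂ),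
        X 0 * f ∈ Wspan (n+1) e → f ∈ Wspan (n+1) e := by
      intro e f hf
      rw [mem_Wspan_iff] at hf ⊢
      apply hSB e
      rwa [map_mul, Psi_X_zero] at hf
    -- K (n+1)
    have hK1 : ∀ (d : ℕ) (f : MvPolynomial (Fin (n+2)) ℂ),
        (∀ ε : Fin (n+1) → ℂ, (∀ i, ε i = 1 ∨ ε i = -1) → f ∈ pIdeal (n+1) ε ^ d) →
          f ∈ Wspan (n+1) d := by
      intro d
      induction d with
      | zero => intro f _; exact hE1 f
      | succ d ihd =>
        intro f hf
        set v := Psi n f with hv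
        set g0 := (v %ₘ qB n).coeff 0 with hg0def
        set g1 := (v %ₘ qB n).coeff 1 with hg1def
        have hB : ∀ s : ℂ, (s = 1 ∨ s = -1) → ∀ ε' : Fin n → ℂ,
            (∀ i, ε' i = 1 ∨ ε' i = -1) →
            g0 + C s * X 0 * g1 ∈ pIdeal n ε' ^ (d+1) := by
          intro s hs ε' hε'
          have hvalid : ∀ i, (Fin.snoc ε' s : Fin (n+1) → ℂ) i = 1 ∨
              (Fin.snoc ε' s : Fin (n+1) → ℂ) i = -1 := by
            intro i
            induction i using Fin.lastCases with
            | last => rw [Fin.snoc_last]; exact hs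
            | cast j => rw [Fin.snoc_castSucc]; exact hε' j
          have hev := eval_Psi_mem n (Fin.snoc ε' s) (d+1) (hf (Fin.snoc ε' s) hvalid)
          have hεc : ((Fin.snoc ε' s : Fin (n+1) → ℂ) ∘ Fin.castSucc) = ε' :=
            funext fun j => by simp
          have hεl : (Fin.snoc ε' s : Fin (n+1) → ℂ) (Fin.last n) = s := by simp
          rw [hεc, hεl] at hev
          have hqB0 : Polynomial.eval (C s * X 0 : MvPolynomial (Fin (n+1)) ℂ) (qB n) = 0 := by
            have hs2 : s ^ 2 = 1 := by rcases hs with rfl | rfl <;> ring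
            rw [qB]
            simp only [Polynomial.eval_sub, Polynomial.eval_pow, Polynomial.eval_X,
              Polynomial.eval_C]
            rw [mul_pow, ← map_pow, hs2, map_one, one_mul, sub_self]
          have heq : Polynomial.eval (C s * X 0 : MvPolynomial (Fin (n+1)) ℂ) (Psi n f) =
              g0 + C s * X 0 * g1 := by
            have hrec := reconstruct v
            rw [← hv, hrec]
            simp only [Polynomial.eval_add, Polynomial.eval_mul, Polynomial.eval_C,
              Polynomial.eval_X, hqB0, zero_mul, add_zero, ← hg0def, ← hg1def]
            ring
          rwa [heq] at hev
        have hu1 := ihK (d+1) (g0 + C 1 * X 0 * g1) (hB 1 (Or.inl rfl))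
        have hu2 := ihK (d+1) (g0 + C (-1) * X 0 * g1) (hB (-1) (Or.inr rfl))
        rw [map_one, one_mul] at hu1
        have hC : (C (2⁻¹:ℂ) + C (2⁻¹:ℂ) : MvPolynomial (Fin (n+1)) ℂ) = 1 := by
          rw [← map_add]
          norm_num
        have hg0mem : g0 ∈ Wspan n (d+1) := by
          have h := add_mem (Submodule.smul_mem _ (2⁻¹:ℂ) hu1)
            (Submodule.smul_mem _ (2⁻¹:ℂ) hu2)
          have heq : (2⁻¹:ℂ) • (g0 + X 0 * g1) + (2⁻¹:ℂ) • (g0 + C (-1) * X 0 * g1) = g0 := by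
            rw [smul_eq_C_mul, smul_eq_C_mul, map_neg, map_one]
            linear_combination g0 * hC
          rwa [heq] at h
        have hx0g1 : X 0 * g1 ∈ Wspan n (d+1) := by
          have h := sub_mem (Submodule.smul_mem _ (2⁻¹:ℂ) hu1)
            (Submodule.smul_mem _ (2⁻¹:ℂ) hu2)
          have heq : (2⁻¹:ℂ) • (g0 + X 0 * g1) - (2⁻¹:ℂ) • (g0 + C (-1) * X 0 * g1) =
              X 0 * g1 := by
            rw [smul_eq_C_mul, smul_eq_C_mul, map_neg, map_one]
            linear_combination (X 0 * g1 : MvPolynomial (Fin (n+1)) ℂ) * hC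
          rwa [heq] at h
        have hg1mem : g1 ∈ Wspan n (d+1) := ihS (d+1) g1 hx0g1
        -- the remainder lies in each pIdeal power
        set w := (Psi n).symm (v /ₘ qB n) with hw
        have hfw : f = rename Fin.castSucc g0 + rename Fin.castSucc g1 * X (Fin.last n).succ
            + qq (n+1) (Fin.last n) * w := by
          apply (Psi n).injective
          rw [map_add, map_add, map_mul, map_mul, Psi_rename, Psi_rename, Psi_X_succ_last,
            Psi_qq_last, AlgEquiv.apply_symm_apply, ← hv]
          exact reconstruct v
        have hqw : ∀ ε : Fin (n+1) → ℂ, (∀ i, ε i = 1 ∨ ε i = -1) →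
            qq (n+1) (Fin.last n) * w ∈ pIdeal (n+1) ε ^ (d+1) := by
          intro ε hε
          have hεc : ∀ i, (ε ∘ Fin.castSucc) i = 1 ∨ (ε ∘ Fin.castSucc) i = -1 :=
            fun i => hε _
          have hr0 : rename Fin.castSucc g0 ∈ pIdeal (n+1) ε ^ (d+1) :=
            rename_pIdeal n ε (d+1) (Wspan_le_pow (fun i => qq_mem n _ hεc i) hg0mem)
          have hr1 : rename Fin.castSucc g1 ∈ pIdeal (n+1) ε ^ (d+1) :=
            rename_pIdeal n ε (d+1) (Wspan_le_pow (fun i => qq_mem n _ hεc i) hg1mem)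
          have hsub : qq (n+1) (Fin.last n) * w = f - rename Fin.castSucc g0
              - rename Fin.castSucc g1 * X (Fin.last n).succ := by
            rw [hfw]; ring
          rw [hsub]
          exact sub_mem (sub_mem (hf ε hε) hr0) (Ideal.mul_mem_right _ _ hr1)
        have hwmem : w ∈ Wspan (n+1) d := by
          apply ihd
          intro ε hε
          have := colon_lemma n ε hε (d+1) w (hqw ε hε)
          simpa using this
        rw [mem_Wspan_iff]
        have hpsif : Psi n f = Polynomial.C g0 + Polynomial.C g1 * Polynomial.X
            + qB n * (v /ₘ qB n) := by
          rw [← hv]; exact reconstruct v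
        rw [hpsif]
        refine add_mem (add_mem ?_ ?_) ?_
        · simpa using C_mul_X_mem_WB n hg0mem (Nat.zero_le 1)
        · simpa using C_mul_X_mem_WB n hg1mem (le_refl 1)
        · have hvw : v /ₘ qB n = Psi n w := by rw [hw, AlgEquiv.apply_symm_apply]
          rw [hvw]
          exact qB_mul_WB n ((mem_Wspan_iff n d w).1 hwmem)
    exact ⟨hE1, hS1, hK1⟩
open MvPolynomial

theorem stmt16 (n d : ℕ) (hn : 1 ≤ n) (hd : 1 ≤ d) :
    (⨅ ε : {ε : Fin n → ℂ // ∀ i, ε i = 1 ∨ ε i = -1}, (pIdeal n ε.1) ^ d)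
      = (⨅ ε : {ε : Fin n → ℂ // ∀ i, ε i = 1 ∨ ε i = -1}, pIdeal n ε.1) ^ d := by
  apply le_antisymm
  · intro f hf
    have hf' : ∀ ε : Fin n → ℂ, (∀ i, ε i = 1 ∨ ε i = -1) → f ∈ pIdeal n ε ^ d := by
      intro ε hε
      exact (Submodule.mem_iInf _).1 hf ⟨ε, hε⟩
    have hK := (package n).2.2 d f hf'
    refine Wspan_le_pow
      (I := ⨅ ε : {ε : Fin n → ℂ // ∀ i, ε i = 1 ∨ ε i = -1}, pIdeal n ε.1) ?_ hK
    intro i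
    rw [Submodule.mem_iInf]
    intro ε
    exact qq_mem n ε.1 ε.2 i
  · exact le_iInf fun ε => Ideal.pow_right_mono (iInf_le _ ε) d
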